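/- Let L1, L2 be two-dimensional vector spaces over ℂ, let q be a quadratic form on L1 ⊗ L2 whose zero set is exactly the set of product vectors, and let L12 ⊂ L1 ⊗ L2 be a two-dimensional subspace with rank L12 = 1. Then there exist a basis {x1, y1} of L1 and a basis {x2, y2} of L2 such that L12 = span{x1 ⊗ x2, y1 ⊗ x2 + x1 ⊗ y2}; moreover every product vector in L12 is of the form λ·(x1 ⊗ x2) for some λ ∈ ℂ. -/

import Mathlib

open TensorProduct

/-- The rank of the restriction of a quadratic form `q` on `M` to a submodule `L`,
defined as the rank of the polar (bilinear) form of the restriction. -/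
noncomputable def quadRankOn {M : Type*} [AddCommGroup M] [Module ℂ M]
    (q : QuadraticForm ℂ M) (L : Submodule ℂ M) : ℕ :=
  Module.finrank ℂ (LinearMap.range (QuadraticMap.polarBilin (q.comp L.subtype)))

theorem stmt_3 {L1 L2 : Type*} [AddCommGroup L1] [Module ℂ L1]
    [AddCommGroup L2] [Module ℂ L2]
    (h1 : Module.finrank ℂ L1 = 2) (h2 : Module.finrank ℂ L2 = 2)
    (q : QuadraticForm ℂ (L1 ⊗[ℂ] L2))
    (hq : ∀ v : L1 ⊗[ℂ] L2, q v = 0 ↔ ∃ (x : L1) (y : L2), v = x ⊗ₜ[ℂ] y)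
    (L12 : Submodule ℂ (L1 ⊗[ℂ] L2)) (h12 : Module.finrank ℂ L12 = 2)
    (hrank : quadRankOn q L12 = 1) :
    ∃ (b1 : Module.Basis (Fin 2) ℂ L1) (b2 : Module.Basis (Fin 2) ℂ L2),
      L12 = Submodule.span ℂ {b1 0 ⊗ₜ[ℂ] b2 0, b1 1 ⊗ₜ[ℂ] b2 0 + b1 0 ⊗ₜ[ℂ] b2 1} ∧
      ∀ v ∈ L12, (∃ (x : L1) (y : L2), v = x ⊗ₜ[ℂ] y) →
        ∃ c : ℂ, v = c • (b1 0 ⊗ₜ[ℂ] b2 0) := by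
  classical
  haveI : FiniteDimensional ℂ L1 := FiniteDimensional.of_finrank_pos (by rw [h1]; norm_num)
  haveI : FiniteDimensional ℂ L2 := FiniteDimensional.of_finrank_pos (by rw [h2]; norm_num)
  haveI : FiniteDimensional ℂ L12 := FiniteDimensional.of_finrank_pos (by rw [h12]; norm_num)
  set Q : QuadraticForm ℂ L12 := q.comp L12.subtype with hQdef
  set B := QuadraticMap.polarBilin Q with hBdef
  have hQv : ∀ u : L12, Q u = q (u : L1 ⊗[ℂ] L2) := fun u => rfl
  have hadd : ∀ x y : L12, Q (x + y) = Q x + Q y + QuadraticMap.polar (⇑Q) x y := by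
    intro x y; simp only [QuadraticMap.polar]; ring
  -- kernel of B has dimension 1
  have hker : Module.finrank ℂ (LinearMap.ker B) = 1 := by
    have h := LinearMap.finrank_range_add_finrank_ker B
    rw [h12] at h
    have hr : Module.finrank ℂ (LinearMap.range B) = 1 := hrank
    omega
  obtain ⟨p0, hp0mem, hp0ne⟩ : ∃ p0 ∈ LinearMap.ker B, p0 ≠ 0 := by
    rw [← Submodule.ne_bot_iff]
    intro h
    rw [h] at hker
    simp at hker
  have hBp0 : ∀ u : L12, QuadraticMap.polar (⇑Q) p0 u = 0 := by
    intro u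
    have h0 : B p0 = 0 := LinearMap.mem_ker.mp hp0mem
    rw [← QuadraticMap.polarBilin_apply_apply, ← hBdef, h0]
    simp
  have hQp0 : Q p0 = 0 := by
    have h2' := QuadraticMap.polar_self Q p0
    rw [hBp0 p0, two_nsmul] at h2'
    exact add_self_eq_zero.mp h2'.symm
  -- w0 with Q w0 ≠ 0
  obtain ⟨w0, hQw0⟩ : ∃ w0 : L12, Q w0 ≠ 0 := by
    by_contra h
    push_neg at h
    have hB0 : B = 0 := by
      ext x y
      simp [hBdef, QuadraticMap.polarBilin_apply_apply, QuadraticMap.polar, h]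
    have hzero : quadRankOn q L12 = 0 := by
      unfold quadRankOn
      rw [← hQdef, ← hBdef, hB0]
      simp
    omega
  -- key quadratic formula
  have hQcomb : ∀ s t : ℂ, Q (s • p0 + t • w0) = t * t * Q w0 := by
    intro s t
    rw [hadd, QuadraticMap.map_smul, QuadraticMap.map_smul,
      QuadraticMap.polar_smul_left, QuadraticMap.polar_smul_right, hBp0, hQp0]
    simp [smul_eq_mul]
  -- p0, w0 independent, form basis of L12
  have hli : LinearIndependent ℂ ![p0, w0] := by
    rw [LinearIndependent.pair_iff]
    intro s t hst
    have ht : t = 0 := by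
      by_contra ht
      have h' := hQcomb s t
      rw [hst] at h'
      simp only [map_zero] at h'
      rcases mul_eq_zero.mp h'.symm with h'' | h''
      · exact ht (mul_self_eq_zero.mp h'')
      · exact hQw0 h''
    refine ⟨?_, ht⟩
    rw [ht, zero_smul, add_zero] at hst
    exact (smul_eq_zero.mp hst).resolve_right hp0ne
  have cardL : Fintype.card (Fin 2) = Module.finrank ℂ L12 := by simp [h12]
  set bL : Module.Basis (Fin 2) ℂ L12 := basisOfLinearIndependentOfCardEqFinrank hli cardL with hbLdef
  have hbL : ∀ i, bL i = ![p0, w0] i := fun i => by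
    rw [hbLdef, coe_basisOfLinearIndependentOfCardEqFinrank]
  have hrepr : ∀ u : L12, u = (bL.repr u 0) • p0 + (bL.repr u 1) • w0 := by
    intro u
    have h := bL.sum_repr u
    rw [Fin.sum_univ_two, hbL 0, hbL 1] at h
    simpa using h.symm
  -- product vectors in L12 are multiples of p0
  have key : ∀ u : L12, Q u = 0 → ∃ c : ℂ, u = c • p0 := by
    intro u hu
    have h := hrepr u
    have hQu := hQcomb (bL.repr u 0) (bL.repr u 1)
    rw [← h, hu] at hQu
    have ht : bL.repr u 1 = 0 := by
      rcases mul_eq_zero.mp hQu.symm with h' | h'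
      · exact mul_self_eq_zero.mp h'
      · exact absurd h' hQw0
    refine ⟨bL.repr u 0, ?_⟩
    rw [ht, zero_smul, add_zero] at h
    exact h
  -- p0 is a product vector
  obtain ⟨x1, x2, hpx⟩ : ∃ (x : L1) (y : L2), (p0 : L1 ⊗[ℂ] L2) = x ⊗ₜ[ℂ] y :=
    (hq _).mp (by rw [← hQv]; exact hQp0)
  have hp0coe : (p0 : L1 ⊗[ℂ] L2) ≠ 0 := by
    simpa [Submodule.coe_eq_zero] using hp0ne
  have hx1 : x1 ≠ 0 := by rintro rfl; rw [zero_tmul] at hpx; exact hp0coe hpx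
  have hx2 : x2 ≠ 0 := by rintro rfl; rw [tmul_zero] at hpx; exact hp0coe hpx
  -- extend x1, x2 to bases
  obtain ⟨y1, hy1⟩ : ∃ y, y ∉ Submodule.span ℂ {x1} := by
    by_contra h
    push_neg at h
    have htop : Submodule.span ℂ {x1} = ⊤ := Submodule.eq_top_iff'.mpr h
    have h1' : Module.finrank ℂ (Submodule.span ℂ {x1}) = 1 := finrank_span_singleton hx1
    rw [htop, finrank_top] at h1'
    omega
  have hli1 : LinearIndependent ℂ ![x1, y1] := by
    rw [LinearIndependent.pair_iff]
    intro s t hst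
    have ht : t = 0 := by
      by_contra ht
      apply hy1
      rw [Submodule.mem_span_singleton]
      have h'' : t • y1 = (-s) • x1 := by linear_combination (norm := module) hst
      have h3 := congrArg (fun z => t⁻¹ • z) h''
      simp only [smul_smul, inv_mul_cancel₀ ht, one_smul] at h3
      exact ⟨t⁻¹ * -s, h3.symm⟩
    refine ⟨?_, ht⟩
    rw [ht, zero_smul, add_zero] at hst
    exact (smul_eq_zero.mp hst).resolve_right hx1
  obtain ⟨y2, hy2⟩ : ∃ y, y ∉ Submodule.span ℂ {x2} := by
    by_contra h
    push_neg at h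
    have htop : Submodule.span ℂ {x2} = ⊤ := Submodule.eq_top_iff'.mpr h
    have h2' : Module.finrank ℂ (Submodule.span ℂ {x2}) = 1 := finrank_span_singleton hx2
    rw [htop, finrank_top] at h2'
    omega
  have hli2 : LinearIndependent ℂ ![x2, y2] := by
    rw [LinearIndependent.pair_iff]
    intro s t hst
    have ht : t = 0 := by
      by_contra ht
      apply hy2
      rw [Submodule.mem_span_singleton]
      have h'' : t • y2 = (-s) • x2 := by linear_combination (norm := module) hst
      have h3 := congrArg (fun z => t⁻¹ • z) h''
      simp only [smul_smul, inv_mul_cancel₀ ht, one_smul] at h3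
      exact ⟨t⁻¹ * -s, h3.symm⟩
    refine ⟨?_, ht⟩
    rw [ht, zero_smul, add_zero] at hst
    exact (smul_eq_zero.mp hst).resolve_right hx2
  have card1 : Fintype.card (Fin 2) = Module.finrank ℂ L1 := by simp [h1]
  have card2 : Fintype.card (Fin 2) = Module.finrank ℂ L2 := by simp [h2]
  set c1 : Module.Basis (Fin 2) ℂ L1 := basisOfLinearIndependentOfCardEqFinrank hli1 card1 with hc1def
  set c2 : Module.Basis (Fin 2) ℂ L2 := basisOfLinearIndependentOfCardEqFinrank hli2 card2 with hc2def
  have hc1 : ∀ i, c1 i = ![x1, y1] i := fun i => by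
    rw [hc1def, coe_basisOfLinearIndependentOfCardEqFinrank]
  have hc2 : ∀ i, c2 i = ![x2, y2] i := fun i => by
    rw [hc2def, coe_basisOfLinearIndependentOfCardEqFinrank]
  -- coordinates of w0 in the tensor basis
  set bT := Module.Basis.tensorProduct c1 c2 with hbT
  set w : L1 ⊗[ℂ] L2 := (w0 : L1 ⊗[ℂ] L2) with hwdef
  set a := bT.repr w (0, 0) with hadef
  set b := bT.repr w (1, 0) with hbdef2
  set c := bT.repr w (0, 1) with hcdef
  set d := bT.repr w (1, 1) with hddef
  have hw : w = a • (x1 ⊗ₜ[ℂ] x2) + b • (y1 ⊗ₜ[ℂ] x2) + c • (x1 ⊗ₜ[ℂ] y2)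
      + d • (y1 ⊗ₜ[ℂ] y2) := by
    have h := bT.sum_repr w
    rw [Fintype.sum_prod_type, Fin.sum_univ_two, Fin.sum_univ_two, Fin.sum_univ_two, hbT] at h
    simp only [Module.Basis.tensorProduct_apply] at h
    rw [hc1 0, hc1 1, hc2 0, hc2 1] at h
    simp only [Matrix.cons_val_zero, Matrix.cons_val_one, Matrix.head_cons] at h
    rw [← h, ← hadef, ← hbdef2, ← hcdef, ← hddef]
    abel
  -- d = 0
  have hd : d = 0 := by
    by_contra hd
    set vL : L12 := (c * b - a * d) • p0 + d • w0 with hvL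
    have hQvL : Q vL ≠ 0 := by
      rw [hvL, hQcomb]
      exact mul_ne_zero (mul_ne_zero hd hd) hQw0
    apply hQvL
    rw [hQv, hq]
    refine ⟨c • x1 + d • y1, b • x2 + d • y2, ?_⟩
    have hcoe : (vL : L1 ⊗[ℂ] L2) = (c * b - a * d) • (x1 ⊗ₜ[ℂ] x2) + d • w := by
      rw [hvL]
      simp only [Submodule.coe_add, SetLike.val_smul]
      rw [hpx, ← hwdef]
    rw [hcoe, hw]
    simp only [tmul_add, add_tmul, tmul_smul, ← smul_tmul', smul_smul, smul_add]
    module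
  -- b ≠ 0 and c ≠ 0
  have hbne : b ≠ 0 := by
    intro hb
    apply hQw0
    rw [hQv, hq]
    refine ⟨x1, a • x2 + c • y2, ?_⟩
    rw [← hwdef, hw, hd, hb]
    simp only [tmul_add, add_tmul, tmul_smul, ← smul_tmul', smul_smul, zero_smul, add_zero]
    try module
  have hcne : c ≠ 0 := by
    intro hc
    apply hQw0
    rw [hQv, hq]
    refine ⟨a • x1 + b • y1, x2, ?_⟩
    rw [← hwdef, hw, hd, hc]
    simp only [tmul_add, add_tmul, tmul_smul, ← smul_tmul', smul_smul, zero_smul, add_zero]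
    try module
  -- final bases
  set Y1 : L1 := a • x1 + b • y1 with hY1
  set Y2 : L2 := c • y2 with hY2
  have hliB1 : LinearIndependent ℂ ![x1, Y1] := by
    rw [LinearIndependent.pair_iff]
    intro s t hst
    have h' : (s + t * a) • x1 + (t * b) • y1 = 0 := by
      rw [hY1] at hst
      linear_combination (norm := module) hst
    obtain ⟨h1', h2'⟩ := LinearIndependent.pair_iff.mp hli1 _ _ h'
    have ht : t = 0 := by
      rcases mul_eq_zero.mp h2' with h | h
      · exact h
      · exact absurd h hbne
    constructor
    · rw [ht] at h1'; simpa using h1'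
    · exact ht
  have hliB2 : LinearIndependent ℂ ![x2, Y2] := by
    rw [LinearIndependent.pair_iff]
    intro s t hst
    have h' : s • x2 + (t * c) • y2 = 0 := by
      rw [hY2] at hst
      linear_combination (norm := module) hst
    obtain ⟨h1', h2'⟩ := LinearIndependent.pair_iff.mp hli2 _ _ h'
    have ht : t = 0 := by
      rcases mul_eq_zero.mp h2' with h | h
      · exact h
      · exact absurd h hcne
    exact ⟨h1', ht⟩
  set BB1 : Module.Basis (Fin 2) ℂ L1 := basisOfLinearIndependentOfCardEqFinrank hliB1 card1 with hBB1def
  set BB2 : Module.Basis (Fin 2) ℂ L2 := basisOfLinearIndependentOfCardEqFinrank hliB2 card2 with hBB2def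
  have hBB1 : ∀ i, BB1 i = ![x1, Y1] i := fun i => by
    rw [hBB1def, coe_basisOfLinearIndependentOfCardEqFinrank]
  have hBB2 : ∀ i, BB2 i = ![x2, Y2] i := fun i => by
    rw [hBB2def, coe_basisOfLinearIndependentOfCardEqFinrank]
  have e1 : BB1 0 ⊗ₜ[ℂ] BB2 0 = (p0 : L1 ⊗[ℂ] L2) := by
    rw [hBB1 0, hBB2 0]
    simp only [Matrix.cons_val_zero]
    exact hpx.symm
  have e2 : BB1 1 ⊗ₜ[ℂ] BB2 0 + BB1 0 ⊗ₜ[ℂ] BB2 1 = w := by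
    rw [hBB1 1, hBB1 0, hBB2 0, hBB2 1]
    simp only [Matrix.cons_val_zero, Matrix.cons_val_one, Matrix.head_cons]
    rw [hw, hd, hY1, hY2]
    simp only [tmul_add, add_tmul, tmul_smul, ← smul_tmul', smul_smul, zero_smul, add_zero]
    try module
  refine ⟨BB1, BB2, ?_, ?_⟩
  · rw [e1, e2]
    apply le_antisymm
    · intro v hv
      have h := hrepr ⟨v, hv⟩
      have hv' : v = (bL.repr ⟨v, hv⟩ 0) • (p0 : L1 ⊗[ℂ] L2)
          + (bL.repr ⟨v, hv⟩ 1) • w := by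
        have h' := congrArg (Subtype.val) h
        simpa [hwdef] using h'
      rw [hv']
      exact add_mem
        (Submodule.smul_mem _ _ (Submodule.subset_span (by simp)))
        (Submodule.smul_mem _ _ (Submodule.subset_span (by simp)))
    · rw [Submodule.span_le]
      intro z hz
      rcases hz with hz | hz
      · rw [hz]; exact p0.2
      · rw [Set.mem_singleton_iff] at hz; rw [hz, hwdef]; exact w0.2
  · intro v hv hprod
    have hqv : q v = 0 := (hq v).mpr hprod
    have hQv0 : Q ⟨v, hv⟩ = 0 := by rw [hQv]; exact hqv
    obtain ⟨cc, hcc⟩ := key ⟨v, hv⟩ hQv0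
    refine ⟨cc, ?_⟩
    rw [e1]
    have h' := congrArg (Subtype.val) hcc
    simpa using h'
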